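/- Fundamental theorem of asset pricing under model uncertainty with short sales prohibitions (multi-period): there exists no self-financing trading strategy with h_m(t)(ω) ≥ 0 for all m = 1,…,M, t = 1,…,T, ω ∈ Ω that is an arbitrage under model uncertainty if and only if there exists a supermartingale measure Q with Q(ω) > 0 for every ω ∈ Ω. -/

import Mathlib

open Finset MeasureTheory

variable {Ω : Type*} [Fintype Ω]

/-- A probability measure on the finite sample space `Ω`. -/
def IsProb (P : Ω → ℝ) : Prop := (∀ ω, 0 ≤ P ω) ∧ ∑ ω, P ω = 1

/-- Expectation of `X` under `P`: `E_P[X] = ∑ ω, P ω * X ω`. -/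
def expect (P X : Ω → ℝ) : ℝ := ∑ ω, P ω * X ω

/-- Discounted value process of the strategy `(h0, h)`:
`V*(0) = h0(1) + ∑ m, h m 1 * S m 0` and `V*(t) = h0(t) + ∑ m, h m t * S m t` for `t ≥ 1`. -/
def Vstar {M : ℕ} (S : Fin M → ℕ → Ω → ℝ) (h0 : ℕ → Ω → ℝ)
    (h : Fin M → ℕ → Ω → ℝ) : ℕ → Ω → ℝ := fun t ω =>
  if t = 0 then h0 1 ω + ∑ m, h m 1 ω * S m 0 ω
  else h0 t ω + ∑ m, h m t ω * S m t ω

/-- Discounted gain process `G*(t) = ∑ m, ∑ u = 1..t, h m u * (S m u − S m (u−1))`. -/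
def Gstar {M : ℕ} (S : Fin M → ℕ → Ω → ℝ) (h : Fin M → ℕ → Ω → ℝ) : ℕ → Ω → ℝ :=
  fun t ω => ∑ m, ∑ u ∈ Finset.Icc 1 t, h m u ω * (S m u ω - S m (u - 1) ω)

/-- Self-financing condition, for `t = 1, …, T−1`. -/
def SelfFinancing {M : ℕ} (T : ℕ) (S : Fin M → ℕ → Ω → ℝ) (h0 : ℕ → Ω → ℝ)
    (h : Fin M → ℕ → Ω → ℝ) : Prop :=
  ∀ t : ℕ, 1 ≤ t → t + 1 ≤ T → ∀ ω,
    (h0 (t + 1) ω - h0 t ω) + ∑ m, (h m (t + 1) ω - h m t ω) * S m t ω = 0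

/-- The holdings used on `(t−1, t]` are chosen at time `t−1`:
each `h_m(t)` is `ℱ_{t−1}`-measurable, `t = 1, …, T`. -/
def MeasStrategy {M : ℕ} (T : ℕ) (F : ℕ → MeasurableSpace Ω) (h0 : ℕ → Ω → ℝ)
    (h : Fin M → ℕ → Ω → ℝ) : Prop :=
  ∀ t : ℕ, 1 ≤ t → t ≤ T →
    Measurable[F (t - 1)] (h0 t) ∧ ∀ m, Measurable[F (t - 1)] (h m t)

/-- Arbitrage under model uncertainty in the multi-period model, given the family
`Pfam` of actual probability measures. -/
def IsArbitrage {M : ℕ} (T : ℕ) (S : Fin M → ℕ → Ω → ℝ) (Pfam : Set (Ω → ℝ))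
    (h0 : ℕ → Ω → ℝ) (h : Fin M → ℕ → Ω → ℝ) : Prop :=
  (∀ ω, Vstar S h0 h 0 ω = 0) ∧ (∀ ω, 0 ≤ Vstar S h0 h T ω) ∧
    ∃ P ∈ Pfam, 0 < expect P (Vstar S h0 h T)

/-- Martingale measure: `E_Q[S*_m(u) ∣ ℱ_t] = S*_m(t)` for all `0 ≤ t ≤ u ≤ T`,
expressed via sums over `ℱ_t`-measurable sets. -/
def IsMartingaleMeasure {M : ℕ} (T : ℕ) (F : ℕ → MeasurableSpace Ω)
    (S : Fin M → ℕ → Ω → ℝ) (Q : Ω → ℝ) : Prop :=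
  ∀ (m : Fin M) (t u : ℕ), t ≤ u → u ≤ T → ∀ A : Finset Ω,
    MeasurableSet[F t] (A : Set Ω) →
    ∑ ω ∈ A, Q ω * S m u ω = ∑ ω ∈ A, Q ω * S m t ω

/-- Supermartingale measure: `E_Q[S*_m(u) ∣ ℱ_t] ≤ S*_m(t)` for all `0 ≤ t ≤ u ≤ T`,
expressed via sums over `ℱ_t`-measurable sets. -/
def IsSupermartingaleMeasure {M : ℕ} (T : ℕ) (F : ℕ → MeasurableSpace Ω)
    (S : Fin M → ℕ → Ω → ℝ) (Q : Ω → ℝ) : Prop :=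
  ∀ (m : Fin M) (t u : ℕ), t ≤ u → u ≤ T → ∀ A : Finset Ω,
    MeasurableSet[F t] (A : Set Ω) →
    ∑ ω ∈ A, Q ω * S m u ω ≤ ∑ ω ∈ A, Q ω * S m t ω


section Aux

open Finset

/-- Carathéodory-type lemma for finitely generated convex cones. -/
lemma cone_caratheodory {E ι : Type*} [AddCommGroup E] [Module ℝ E]
    (v : ι → E) (s : Finset ι) :
    ∀ c : ι → ℝ, (∀ i ∈ s, 0 ≤ c i) →
    ∃ t : Finset ι, t ⊆ s ∧ (LinearIndependent ℝ fun i : t => v i) ∧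
      ∃ d : ι → ℝ, (∀ i, 0 ≤ d i) ∧ ∑ i ∈ t, d i • v i = ∑ i ∈ s, c i • v i := by
  classical
  induction s using Finset.strongInduction with
  | _ s ih =>
    intro c hc
    by_cases hind : LinearIndependent ℝ fun i : s => v i
    · refine ⟨s, subset_rfl, hind, fun i => if i ∈ s then c i else 0, ?_, ?_⟩
      · intro i
        by_cases hi : i ∈ s
        · simpa [hi] using hc i hi
        · simp [hi]
      · exact Finset.sum_congr rfl fun i hi => by simp [hi]
    · obtain ⟨g, hgsum, i₁, hgi₁⟩ := Fintype.not_linearIndependent_iff.mp hind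
      set e : ι → ℝ := fun i => if h : i ∈ s then g ⟨i, h⟩ else 0 with he
      have hesum : ∑ i ∈ s, e i • v i = 0 := by
        rw [← Finset.sum_attach s (fun i => e i • v i)]
        rw [← hgsum, Finset.univ_eq_attach]
        exact Finset.sum_congr rfl fun i _ => by simp [he]
      have hexist : ∃ e' : ι → ℝ, (∑ i ∈ s, e' i • v i = 0) ∧ ∃ i ∈ s, 0 < e' i := by
        rcases lt_or_gt_of_ne hgi₁ with hneg | hpos
        · refine ⟨-e, by simp only [Pi.neg_apply, neg_smul, Finset.sum_neg_distrib,
            hesum, neg_zero], i₁, i₁.2, ?_⟩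
          simp only [Pi.neg_apply, he, dif_pos i₁.2]
          simpa using hneg
        · exact ⟨e, hesum, i₁, i₁.2, by simp only [he, dif_pos i₁.2]; simpa using hpos⟩
      obtain ⟨e', hsum', hpos'⟩ := hexist
      set P : Finset ι := s.filter (fun i => 0 < e' i) with hP
      have hPne : P.Nonempty := by
        obtain ⟨i, hi, hei⟩ := hpos'
        exact ⟨i, by simp [hP, hi, hei]⟩
      obtain ⟨i₀, hi₀P, hi₀min⟩ := Finset.exists_min_image P (fun i => c i / e' i) hPne
      have hi₀s : i₀ ∈ s := (Finset.mem_filter.mp hi₀P).1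
      have hei₀ : 0 < e' i₀ := (Finset.mem_filter.mp hi₀P).2
      set r : ℝ := c i₀ / e' i₀ with hr
      have hr0 : 0 ≤ r := div_nonneg (hc i₀ hi₀s) hei₀.le
      set c' : ι → ℝ := fun i => c i - r * e' i with hc'
      have hc'nn : ∀ i ∈ s, 0 ≤ c' i := by
        intro i hi
        by_cases hei : 0 < e' i
        · have : r ≤ c i / e' i := hi₀min i (by simp [hP, hi, hei])
          have := (le_div_iff₀ hei).mp this
          simp only [hc']; linarith
        · push_neg at hei
          have h1 : r * e' i ≤ 0 := mul_nonpos_of_nonneg_of_nonpos hr0 hei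
          have h2 := hc i hi
          simp only [hc']; linarith
      have hc'i₀ : c' i₀ = 0 := by
        simp only [hc', hr]
        field_simp
        ring
      have hsumc' : ∑ i ∈ s, c' i • v i = ∑ i ∈ s, c i • v i := by
        simp only [hc', sub_smul, Finset.sum_sub_distrib]
        have : ∑ i ∈ s, (r * e' i) • v i = r • ∑ i ∈ s, e' i • v i := by
          rw [Finset.smul_sum]
          exact Finset.sum_congr rfl fun i _ => (smul_smul r (e' i) (v i)).symm
        rw [this, hsum', smul_zero, sub_zero]
      have herase : ∑ i ∈ s.erase i₀, c' i • v i = ∑ i ∈ s, c' i • v i :=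
        Finset.sum_erase s (by simp [hc'i₀])
      obtain ⟨t, hts, hind', d, hd, hdsum⟩ :=
        ih (s.erase i₀) (Finset.erase_ssubset hi₀s) c'
          (fun i hi => hc'nn i (Finset.mem_of_mem_erase hi))
      exact ⟨t, hts.trans (Finset.erase_subset _ _), hind', d, hd, by
        rw [hdsum, herase, hsumc']⟩

/-- Separation of a point from a finitely generated convex cone in `Ω → ℝ`. -/
lemma cone_separation {Ω ι : Type*} [Fintype Ω] [Fintype ι]
    (v : ι → Ω → ℝ) (b : Ω → ℝ)
    (hb : ¬ ∃ c : ι → ℝ, (∀ i, 0 ≤ c i) ∧ (∑ i, c i • v i) = b) :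
    ∃ f : Ω → ℝ, (∀ i, ∑ ω, f ω * v i ω ≤ 0) ∧ 0 < ∑ ω, f ω * b ω := by
  classical
  let eqv : EuclideanSpace ℝ Ω ≃ₗ[ℝ] (Ω → ℝ) := WithLp.linearEquiv 2 ℝ (Ω → ℝ)
  set w : ι → EuclideanSpace ℝ Ω := fun i => eqv.symm (v i) with hw
  let K : ConvexCone ℝ (EuclideanSpace ℝ Ω) :=
  { carrier := {x | ∃ c : ι → ℝ, (∀ i, 0 ≤ c i) ∧ ∑ i, c i • w i = x}
    smul_mem' := by
      rintro r hr x ⟨c, hc, rfl⟩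
      exact ⟨fun i => r * c i, fun i => mul_nonneg hr.le (hc i), by
        rw [Finset.smul_sum]; exact Finset.sum_congr rfl fun i _ => (smul_smul r (c i) (w i)).symm⟩
    add_mem' := by
      rintro x ⟨c, hc, rfl⟩ y ⟨c', hc', rfl⟩
      exact ⟨fun i => c i + c' i, fun i => add_nonneg (hc i) (hc' i), by
        rw [← Finset.sum_add_distrib]
        exact Finset.sum_congr rfl fun i _ => by simp [add_smul]⟩ }
  have h0K : (0 : EuclideanSpace ℝ Ω) ∈ K := ⟨0, fun i => le_refl 0, by simp⟩
  have hbK : eqv.symm b ∉ K := by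
    rintro ⟨c, hc, hsum⟩
    exact hb ⟨c, hc, by
      have := congrArg eqv hsum
      simpa only [map_sum, _root_.map_smul, LinearEquiv.apply_symm_apply, hw] using this⟩
  let L : (t : Finset ι) → (↥t → ℝ) →ₗ[ℝ] EuclideanSpace ℝ Ω := fun t =>
  { toFun := fun c => ∑ i : t, c i • w i
    map_add' := by intro a b; simp [add_smul, Finset.sum_add_distrib]
    map_smul' := by intro r a; simp [smul_smul, Finset.smul_sum]  }
  have hclosed : IsClosed (K : Set (EuclideanSpace ℝ Ω)) := by
    have key : (K : Set (EuclideanSpace ℝ Ω)) =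
        ⋃ t ∈ {t : Finset ι | LinearIndependent ℝ fun i : t => w i},
          (L t) '' {c | ∀ i, 0 ≤ c i} := by
      ext x
      constructor
      · rintro ⟨c, hc, rfl⟩
        obtain ⟨t, -, hind, d, hd, hdsum⟩ := cone_caratheodory w Finset.univ c (fun i _ => hc i)
        refine Set.mem_biUnion hind ⟨fun i => d i, fun i => hd i, ?_⟩
        show ∑ i : t, d i • w i = _
        rw [Finset.univ_eq_attach, Finset.sum_attach t (fun i => d i • w i), hdsum]
      · intro hx
        simp only [Set.mem_iUnion] at hx
        obtain ⟨t, hind, c, hc, rfl⟩ := hx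
        refine ⟨fun i => if h : i ∈ t then c ⟨i, h⟩ else 0, ?_, ?_⟩
        · intro i
          by_cases h : i ∈ t
          · simpa [h] using hc ⟨i, h⟩
          · simp [h]
        · show _ = ∑ i : t, c i • w i
          rw [← Finset.sum_subset (Finset.subset_univ t)
            (fun i _ hi => by simp [hi])]
          rw [← Finset.sum_attach t fun i => (if h : i ∈ t then c ⟨i, h⟩ else 0) • w i,
            Finset.univ_eq_attach]
          exact Finset.sum_congr rfl fun i _ => by simp
    rw [key]
    apply Set.Finite.isClosed_biUnion (Set.toFinite _)
    intro t ht
    have hker : LinearMap.ker (L t) = ⊥ := by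
      rw [LinearMap.ker_eq_bot']
      intro c hc
      funext i
      exact Fintype.linearIndependent_iff.mp ht c hc i
    have hemb := LinearMap.isClosedEmbedding_of_injective (f := L t) hker
    apply hemb.isClosedMap
    have : {c : ↥t → ℝ | ∀ i, 0 ≤ c i} = ⋂ i, (fun c => c i) ⁻¹' Set.Ici 0 := by
      ext c; simp [Set.mem_iInter]
    rw [this]
    exact isClosed_iInter fun i => isClosed_Ici.preimage (continuous_apply i)
  let C : ProperCone ℝ (EuclideanSpace ℝ Ω) :=
    { carrier := K
      add_mem' := fun ha hb => K.add_mem ha hb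
      zero_mem' := h0K
      smul_mem' := fun c x hx => by
        rcases eq_or_lt_of_le c.2 with hc0 | hc0
        · have : c = 0 := NNReal.coe_eq_zero.mp hc0.symm
          subst this
          simpa using h0K
        · exact K.smul_mem hc0 hx
      isClosed' := hclosed }
  obtain ⟨y, hy1, hy2⟩ :=
    ProperCone.hyperplane_separation' C (x₀ := eqv.symm b) hbK
  refine ⟨fun ω => -(y ω), fun i => ?_, ?_⟩
  · have hwK : w i ∈ K := by
      refine ⟨fun j => if j = i then 1 else 0, fun j => by positivity, ?_⟩
      simp [ite_smul]
    have h1 := hy1 _ hwK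
    rw [PiLp.inner_apply] at h1
    simp only [RCLike.inner_apply, conj_trivial] at h1
    have h2 : 0 ≤ ∑ ω, w i ω * y ω := by
      rw [Finset.sum_congr rfl fun ω _ => mul_comm _ _]; exact h1
    calc ∑ ω, -(y ω) * v i ω = -∑ ω, w i ω * y ω := by
          rw [← Finset.sum_neg_distrib]
          exact Finset.sum_congr rfl fun ω _ => by ring_nf; rfl
      _ ≤ 0 := by linarith
  · rw [PiLp.inner_apply] at hy2
    simp only [RCLike.inner_apply, conj_trivial] at hy2
    have hy2' : ∑ ω, y ω * b ω < 0 := hy2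
    calc (0:ℝ) < -∑ ω, y ω * b ω := by linarith
      _ = ∑ ω, -(y ω) * b ω := by
          rw [← Finset.sum_neg_distrib]
          exact Finset.sum_congr rfl fun ω _ => by ring

end Aux

section FinAux

open Finset

variable {Ω : Type*} [Fintype Ω]

/-- Under self-financing and zero initial value, the value process equals the gains process. -/
lemma vstar_eq_gstar {M : ℕ} (T : ℕ) (S : Fin M → ℕ → Ω → ℝ)
    (h0 : ℕ → Ω → ℝ) (h : Fin M → ℕ → Ω → ℝ)
    (hsf : SelfFinancing T S h0 h) (hV0 : ∀ ω, Vstar S h0 h 0 ω = 0) :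
    ∀ t, 1 ≤ t → t ≤ T → ∀ ω, Vstar S h0 h t ω = Gstar S h t ω := by
  intro t ht
  induction t, ht using Nat.le_induction with
  | base =>
    intro hT ω
    have h00 := hV0 ω
    simp only [Vstar, reduceIte] at h00
    simp only [Vstar, Gstar, if_neg one_ne_zero, Finset.Icc_self, Finset.sum_singleton]
    simp only [Nat.sub_self, mul_sub, Finset.sum_sub_distrib]
    linarith
  | succ t ht ih =>
    intro hT ω
    have hVt := ih (by omega) ω
    have hs := hsf t ht hT ω
    have hG : Gstar S h (t+1) ω = Gstar S h t ω
        + ∑ m, h m (t+1) ω * (S m (t+1) ω - S m t ω) := by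
      simp only [Gstar]
      rw [← Finset.sum_add_distrib]
      refine Finset.sum_congr rfl fun m _ => ?_
      rw [Finset.sum_Icc_succ_top (by omega : 1 ≤ t+1)]
      simp
    have hV : Vstar S h0 h (t+1) ω = Vstar S h0 h t ω
        + ∑ m, h m (t+1) ω * (S m (t+1) ω - S m t ω) := by
      simp only [Vstar, if_neg (by omega : ¬ t+1 = 0), if_neg (by omega : ¬ t = 0)]
      have expand : ∑ m, h m (t+1) ω * S m (t+1) ω =
          ∑ m, h m t ω * S m t ω + ∑ m, (h m (t+1) ω - h m t ω) * S m t ω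
            + ∑ m, h m (t+1) ω * (S m (t+1) ω - S m t ω) := by
        rw [← Finset.sum_add_distrib, ← Finset.sum_add_distrib]
        exact Finset.sum_congr rfl fun m _ => by ring
      linarith
    rw [hV, hVt, hG]

/-- A single-period expected-gain inequality under a supermartingale measure. -/
lemma single_step_nonpos {M : ℕ} (T : ℕ) (F : ℕ → MeasurableSpace Ω)
    (S : Fin M → ℕ → Ω → ℝ) (Q : Ω → ℝ)
    (hQsm : IsSupermartingaleMeasure T F S Q) (m : Fin M) (u : ℕ)
    (hu1 : 1 ≤ u) (huT : u ≤ T) (hfun : Ω → ℝ)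
    (hm : Measurable[F (u-1)] hfun) (hnn : ∀ ω, 0 ≤ hfun ω) :
    ∑ ω, Q ω * (hfun ω * (S m u ω - S m (u-1) ω)) ≤ 0 := by
  classical
  rw [← Finset.sum_fiberwise_of_maps_to (g := hfun) (t := Finset.image hfun Finset.univ)
      (fun x _ => Finset.mem_image_of_mem hfun (Finset.mem_univ x))
      (fun ω => Q ω * (hfun ω * (S m u ω - S m (u-1) ω)))]
  apply Finset.sum_nonpos
  intro r hr
  have hr0 : 0 ≤ r := by
    obtain ⟨x, -, rfl⟩ := Finset.mem_image.mp hr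
    exact hnn x
  set A : Finset Ω := Finset.univ.filter (fun ω => hfun ω = r) with hA
  have hAmeas : MeasurableSet[F (u-1)] (↑A : Set Ω) := by
    have hset : (↑A : Set Ω) = hfun ⁻¹' {r} := by ext x; simp [hA]
    rw [hset]
    exact hm (measurableSet_singleton r)
  have hQ := hQsm m (u-1) u (by omega) huT A hAmeas
  have hcalc : ∑ ω ∈ A, Q ω * (hfun ω * (S m u ω - S m (u-1) ω))
      = r * (∑ ω ∈ A, Q ω * S m u ω - ∑ ω ∈ A, Q ω * S m (u-1) ω) := by
    rw [mul_sub, Finset.mul_sum, Finset.mul_sum, ← Finset.sum_sub_distrib]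
    refine Finset.sum_congr rfl fun ω hω => ?_
    have : hfun ω = r := (Finset.mem_filter.mp hω).2
    rw [this]; ring
  rw [hcalc]
  exact mul_nonpos_of_nonneg_of_nonpos hr0 (by linarith)

end FinAux

section FinAux2

open Finset

variable {Ω : Type*} [Fintype Ω]

/-- The canonical riskless-holdings completion of risky holdings `h` is self-financing,
has zero initial value, and its value process equals the gains process. -/
lemma special_h0 {M : ℕ} (T : ℕ) (S : Fin M → ℕ → Ω → ℝ) (h : Fin M → ℕ → Ω → ℝ) :
    SelfFinancing T S (fun t ω => Gstar S h (t-1) ω - ∑ m, h m t ω * S m (t-1) ω) h ∧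
    (∀ ω, Vstar S (fun t ω => Gstar S h (t-1) ω - ∑ m, h m t ω * S m (t-1) ω) h 0 ω = 0) ∧
    (∀ t, 1 ≤ t → ∀ ω,
      Vstar S (fun t ω => Gstar S h (t-1) ω - ∑ m, h m t ω * S m (t-1) ω) h t ω
        = Gstar S h t ω) := by
  have hGsucc : ∀ (t : ℕ) (ω : Ω), Gstar S h (t+1) ω
      = Gstar S h t ω + ∑ m, h m (t+1) ω * (S m (t+1) ω - S m t ω) := by
    intro t ω
    simp only [Gstar]
    rw [← Finset.sum_add_distrib]
    refine Finset.sum_congr rfl fun m _ => ?_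
    rw [Finset.sum_Icc_succ_top (by omega : 1 ≤ t+1)]
    simp
  have hG0 : ∀ ω : Ω, Gstar S h 0 ω = 0 := by
    intro ω
    simp [Gstar, Finset.Icc_eq_empty (by omega : ¬ (1:ℕ) ≤ 0)]
  refine ⟨?_, ?_, ?_⟩
  · intro t ht htT ω
    obtain ⟨t', rfl⟩ : ∃ t', t = t'+1 := ⟨t-1, by omega⟩
    simp only [Nat.add_sub_cancel]
    have e1 : ∑ m, (h m (t'+1+1) ω - h m (t'+1) ω) * S m (t'+1) ω
        = ∑ m, h m (t'+1+1) ω * S m (t'+1) ω - ∑ m, h m (t'+1) ω * S m (t'+1) ω := by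
      rw [← Finset.sum_sub_distrib]
      exact Finset.sum_congr rfl fun m _ => by ring
    have e2 : ∑ m, h m (t'+1) ω * (S m (t'+1) ω - S m t' ω)
        = ∑ m, h m (t'+1) ω * S m (t'+1) ω - ∑ m, h m (t'+1) ω * S m t' ω := by
      rw [← Finset.sum_sub_distrib]
      exact Finset.sum_congr rfl fun m _ => by ring
    have e3 := hGsucc t' ω
    linarith
  · intro ω
    simp only [Vstar, reduceIte, Nat.sub_self, hG0 ω]
    ring
  · intro t ht ω
    obtain ⟨t', rfl⟩ : ∃ t', t = t'+1 := ⟨t-1, by omega⟩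
    simp only [Vstar, if_neg (by omega : ¬ t'+1 = 0), Nat.add_sub_cancel]
    have e2 : ∑ m, h m (t'+1) ω * (S m (t'+1) ω - S m t' ω)
        = ∑ m, h m (t'+1) ω * S m (t'+1) ω - ∑ m, h m (t'+1) ω * S m t' ω := by
      rw [← Finset.sum_sub_distrib]
      exact Finset.sum_congr rfl fun m _ => by ring
    have e3 := hGsucc t' ω
    linarith

end FinAux2

open Classical in
/-- Generating vectors of the cone of attainable discounted gains (together with the
negative orthant). -/
noncomputable def genVec {Ω : Type*} (T : ℕ) {M : ℕ} (F : ℕ → MeasurableSpace Ω)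
    (S : Fin M → ℕ → Ω → ℝ) : (Fin M × Fin T × (Ω → Bool)) ⊕ Ω → Ω → ℝ
  | .inl (m, s, g) =>
      if MeasurableSet[F s.val] {ω | g ω} then
        (fun ω => if g ω then S m (s.val+1) ω - S m s.val ω else 0)
      else 0
  | .inr ω₀ => fun ω => if ω = ω₀ then -1 else 0

/-- Fundamental theorem of asset pricing under model uncertainty with short sales
prohibitions (multi-period). -/
theorem fundamental_theorem_multi_period_short_sales [Nonempty Ω]
    (T : ℕ) {M : ℕ}
    (F : ℕ → MeasurableSpace Ω)
    (hFmono : ∀ s t : ℕ, s ≤ t → t ≤ T → F s ≤ F t)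
    (hF0 : F 0 = ⊥) (hFT : F T = ⊤)
    (S : Fin M → ℕ → Ω → ℝ)
    (hSmeas : ∀ (m : Fin M) (t : ℕ), t ≤ T → Measurable[F t] (S m t))
    (Pfam : Set (Ω → ℝ)) (hPne : Pfam.Nonempty)
    (hPprob : ∀ P ∈ Pfam, IsProb P)
    (hPpos : ∀ ω : Ω, ∃ P ∈ Pfam, 0 < P ω) :
    (¬ ∃ (h0 : ℕ → Ω → ℝ) (h : Fin M → ℕ → Ω → ℝ),
        MeasStrategy T F h0 h ∧
          (∀ (m : Fin M) (t : ℕ), 1 ≤ t → t ≤ T → ∀ ω, 0 ≤ h m t ω) ∧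
          SelfFinancing T S h0 h ∧ IsArbitrage T S Pfam h0 h) ↔
      ∃ Q : Ω → ℝ, IsProb Q ∧ (∀ ω, 0 < Q ω) ∧
        IsSupermartingaleMeasure T F S Q := by
  classical
  constructor
  · -- no arbitrage → supermartingale measure
    intro hNA
    have key : ∀ ωh : Ω, ∃ f : Ω → ℝ,
        (∀ i, ∑ ω, f ω * genVec T F S i ω ≤ 0) ∧ 0 < f ωh := by
      intro ωh
      have hb : ¬ ∃ c : (Fin M × Fin T × (Ω → Bool)) ⊕ Ω → ℝ,
          (∀ i, 0 ≤ c i) ∧ (∑ i, c i • genVec T F S i)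
            = (fun ω => if ω = ωh then (1:ℝ) else 0) := by
        rintro ⟨c, hc, hcsum⟩
        have hpt : ∀ ω : Ω,
            (∑ p : Fin M × Fin T × (Ω → Bool), c (Sum.inl p) * genVec T F S (Sum.inl p) ω)
              - c (Sum.inr ω) = (if ω = ωh then (1:ℝ) else 0) := by
          intro ω
          have h1 := congrFun hcsum ω
          rw [Finset.sum_apply] at h1
          simp only [Pi.smul_apply, smul_eq_mul] at h1
          rw [Fintype.sum_sum_type] at h1
          have h2 : ∑ ω₀ : Ω, c (Sum.inr ω₀) * genVec T F S (Sum.inr ω₀) ω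
              = -(c (Sum.inr ω)) := by
            simp only [genVec, mul_ite, mul_neg, mul_one, mul_zero, Finset.sum_ite_eq,
              Finset.mem_univ, if_true]
          rw [h2] at h1
          linarith
        rcases Nat.eq_zero_or_pos T with hT0 | hT1
        · have h1 := hpt ωh
          subst hT0
          rw [Finset.univ_eq_empty, Finset.sum_empty] at h1
          simp at h1
          have := hc (Sum.inr ωh)
          linarith
        · -- T ≥ 1 : construct an arbitrage strategy
          set h : Fin M → ℕ → Ω → ℝ := fun m t ω =>
            if htt : 1 ≤ t ∧ t ≤ T then
              ∑ g : Ω → Bool, if MeasurableSet[F (t-1)] {ω' | g ω'} then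
                c (Sum.inl (m, ⟨t-1, by omega⟩, g)) * (if g ω then 1 else 0) else 0
            else 0 with hdef
          obtain ⟨hsf, hV0, hVG⟩ := special_h0 T S h
          set h0 : ℕ → Ω → ℝ :=
            fun t ω => Gstar S h (t-1) ω - ∑ m, h m t ω * S m (t-1) ω with h0def
          have hnn : ∀ (m : Fin M) (t : ℕ), 1 ≤ t → t ≤ T → ∀ ω, 0 ≤ h m t ω := by
            intro m t ht1 htT ω
            simp only [hdef, dif_pos (⟨ht1, htT⟩ : 1 ≤ t ∧ t ≤ T)]
            apply Finset.sum_nonneg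
            intro g _
            by_cases hmg : MeasurableSet[F (t-1)] {ω' | g ω'}
            · rw [if_pos hmg]
              exact mul_nonneg (hc _) (by split <;> norm_num)
            · rw [if_neg hmg]
          have hmeas_h : ∀ (m : Fin M) (t : ℕ), 1 ≤ t → t ≤ T →
              Measurable[F (t-1)] (h m t) := by
            intro m t ht1 htT
            have heq : h m t = fun ω => ∑ g : Ω → Bool,
                if MeasurableSet[F (t-1)] {ω' | g ω'} then
                  c (Sum.inl (m, ⟨t-1, by omega⟩, g)) * (if g ω then 1 else 0) else 0 := by
              funext ω; simp only [hdef, dif_pos (⟨ht1, htT⟩ : 1 ≤ t ∧ t ≤ T)]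
            rw [heq]
            apply Finset.measurable_sum
            intro g _
            by_cases hmg : MeasurableSet[F (t-1)] {ω' | g ω'}
            · simp only [if_pos hmg]
              exact (Measurable.ite hmg measurable_const measurable_const).const_mul _
            · simp only [if_neg hmg]
              exact measurable_const
          have hkey : ∀ (m : Fin M) (u : ℕ) (hu1 : 1 ≤ u) (huT : u ≤ T) (ω : Ω),
              h m u ω * (S m u ω - S m (u-1) ω)
                = ∑ g : Ω → Bool, c (Sum.inl (m, ⟨u-1, by omega⟩, g))
                    * genVec T F S (Sum.inl (m, ⟨u-1, by omega⟩, g)) ω := by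
            intro m u hu1 huT ω
            simp only [hdef, dif_pos (⟨hu1, huT⟩ : 1 ≤ u ∧ u ≤ T)]
            rw [Finset.sum_mul]
            refine Finset.sum_congr rfl fun g _ => ?_
            have hmk : ((⟨u-1, by omega⟩ : Fin T) : ℕ) = u - 1 := rfl
            have huu : u - 1 + 1 = u := by omega
            by_cases hmg : MeasurableSet[F (u-1)] {ω' | g ω'}
            · rw [if_pos hmg]
              simp only [genVec, hmk, huu, if_pos hmg]
              by_cases hg : g ω
              · simp only [if_pos hg]; ring
              · simp only [if_neg hg]; ring
            · rw [if_neg hmg]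
              simp only [genVec, hmk, if_neg hmg]
              simp
          have hGT : ∀ ω, Gstar S h T ω = ∑ p : Fin M × Fin T × (Ω → Bool),
              c (Sum.inl p) * genVec T F S (Sum.inl p) ω := by
            intro ω
            rw [Fintype.sum_prod_type]
            simp only [Gstar]
            refine Finset.sum_congr rfl fun m _ => ?_
            rw [Fintype.sum_prod_type]
            refine Finset.sum_bij'
              (i := fun (u : ℕ) (hu : u ∈ Finset.Icc 1 T) =>
                (⟨u-1, by rw [Finset.mem_Icc] at hu; omega⟩ : Fin T))
              (j := fun (s : Fin T) _ => (s : ℕ)+1)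
              (fun u hu => Finset.mem_univ _)
              (fun s _ => by simp only [Finset.mem_Icc]; have := s.isLt; omega)
              (fun u hu => by
                simp only [Finset.mem_Icc] at hu; simp only [Fin.val_mk]; omega)
              (fun s hs => by apply Fin.ext; simp)
              (fun u hu => by
                rw [Finset.mem_Icc] at hu
                exact hkey m u hu.1 hu.2 ω)
          have hVT : ∀ ω, Vstar S h0 h T ω = (if ω = ωh then (1:ℝ) else 0) + c (Sum.inr ω) := by
            intro ω
            rw [hVG T hT1 ω, hGT ω]
            have := hpt ω
            linarith
          have hVTnn : ∀ ω, 0 ≤ Vstar S h0 h T ω := by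
            intro ω
            rw [hVT ω]
            have := hc (Sum.inr ω)
            split <;> linarith
          apply hNA
          refine ⟨h0, h, ?_, fun m t ht1 htT ω => hnn m t ht1 htT ω, hsf, hV0, hVTnn, ?_⟩
          · -- measurability of the strategy
            intro t ht1 htT
            constructor
            · have hh0 : h0 t = fun ω =>
                  (∑ m2, ∑ u ∈ Finset.Icc 1 (t-1), h m2 u ω * (S m2 u ω - S m2 (u-1) ω))
                    - ∑ m2, h m2 t ω * S m2 (t-1) ω := by
                funext ω; simp only [h0def, Gstar]
              rw [hh0]
              apply Measurable.sub
              · apply Finset.measurable_sum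
                intro m2 _
                apply Finset.measurable_sum
                intro u hu
                rw [Finset.mem_Icc] at hu
                have hm1 : Measurable[F (t-1)] (h m2 u) :=
                  (hmeas_h m2 u hu.1 (by omega)).mono
                    (hFmono (u-1) (t-1) (by omega) (by omega)) le_rfl
                exact hm1.mul
                  (((hSmeas m2 u (by omega)).mono
                      (hFmono u (t-1) (by omega) (by omega)) le_rfl).sub
                    ((hSmeas m2 (u-1) (by omega)).mono
                      (hFmono (u-1) (t-1) (by omega) (by omega)) le_rfl))
              · apply Finset.measurable_sum
                intro m2 _
                exact (hmeas_h m2 t ht1 htT).mul (hSmeas m2 (t-1) (by omega))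
            · intro m2
              exact hmeas_h m2 t ht1 htT
          · -- positive expectation under some P
            obtain ⟨P, hPmem, hPw⟩ := hPpos ωh
            refine ⟨P, hPmem, ?_⟩
            apply Finset.sum_pos'
            · intro ω _
              exact mul_nonneg ((hPprob P hPmem).1 ω) (hVTnn ω)
            · refine ⟨ωh, Finset.mem_univ ωh, ?_⟩
              apply mul_pos hPw
              rw [hVT ωh, if_pos rfl]
              linarith [hc (Sum.inr ωh)]
      obtain ⟨f, hf1, hf2⟩ := cone_separation (genVec T F S) _ hb
      refine ⟨f, hf1, ?_⟩
      have hsum : ∑ ω, f ω * (if ω = ωh then (1:ℝ) else 0) = f ωh := by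
        simp [mul_ite, mul_one, mul_zero, Finset.sum_ite_eq', Finset.mem_univ]
      rwa [hsum] at hf2
    choose f hf1 hf2 using key
    have hfnn : ∀ ωh ω, 0 ≤ f ωh ω := by
      intro ωh ω
      have h1 := hf1 ωh (Sum.inr ω)
      simp only [genVec, mul_ite, mul_neg, mul_one, mul_zero, Finset.sum_ite_eq',
        Finset.mem_univ, if_true] at h1
      linarith
    set Qraw : Ω → ℝ := fun ω => ∑ ωh, f ωh ω with hQraw
    have hQrawpos : ∀ ω, 0 < Qraw ω :=
      fun ω => Finset.sum_pos' (fun ωh _ => hfnn ωh ω) ⟨ω, Finset.mem_univ ω, hf2 ω⟩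
    set cQ : ℝ := ∑ ω, Qraw ω with hcQdef
    have hcQ : 0 < cQ := Finset.sum_pos (fun ω _ => hQrawpos ω) Finset.univ_nonempty
    refine ⟨fun ω => Qraw ω / cQ,
      ⟨fun ω => div_nonneg (hQrawpos ω).le hcQ.le,
        by rw [← Finset.sum_div]; exact div_self (ne_of_gt hcQ)⟩,
      fun ω => div_pos (hQrawpos ω) hcQ, ?_⟩
    intro m t u htu huT A hA
    have hstep : ∀ s : ℕ, t ≤ s → s+1 ≤ T →
        ∑ ω ∈ A, (Qraw ω / cQ) * S m (s+1) ω ≤ ∑ ω ∈ A, (Qraw ω / cQ) * S m s ω := by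
      intro s hts hsT
      set i : (Fin M × Fin T × (Ω → Bool)) ⊕ Ω :=
        Sum.inl (m, ⟨s, by omega⟩, fun ω => decide (ω ∈ A)) with hi
      have hgset : {ω : Ω | (fun ω => decide (ω ∈ A)) ω} = (↑A : Set Ω) := by
        ext ω; simp
      have hgv : ∀ ω, genVec T F S i ω = if ω ∈ A then S m (s+1) ω - S m s ω else 0 := by
        intro ω
        have hmA : MeasurableSet[F s] {ω : Ω | (fun ω => decide (ω ∈ A)) ω} := by
          rw [hgset]
          exact hFmono t s hts (by omega) _ hA
        simp only [hi, genVec]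
        rw [if_pos hmA]
        by_cases hω : ω ∈ A
        · simp [hω]
        · simp [hω]
      have hQrawsum : ∑ ω, Qraw ω * genVec T F S i ω ≤ 0 := by
        have hswap : ∑ ω, Qraw ω * genVec T F S i ω
            = ∑ ωh, ∑ ω, f ωh ω * genVec T F S i ω := by
          rw [Finset.sum_comm]
          refine Finset.sum_congr rfl fun ω _ => ?_
          rw [hQraw, Finset.sum_mul]
        rw [hswap]
        exact Finset.sum_nonpos fun ωh _ => hf1 ωh i
      have hQsumv : ∑ ω, (Qraw ω / cQ) * genVec T F S i ω ≤ 0 := by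
        have hdiv : ∑ ω, (Qraw ω / cQ) * genVec T F S i ω
            = (∑ ω, Qraw ω * genVec T F S i ω) / cQ := by
          rw [Finset.sum_div]
          exact Finset.sum_congr rfl fun ω _ => by ring
        rw [hdiv]
        exact div_nonpos_of_nonpos_of_nonneg hQrawsum hcQ.le
      have hconv : ∑ ω, (Qraw ω / cQ) * genVec T F S i ω
          = ∑ ω ∈ A, (Qraw ω / cQ) * (S m (s+1) ω - S m s ω) := by
        rw [Finset.sum_congr rfl (fun ω _ => by rw [hgv ω])]
        simp only [mul_ite, mul_zero]
        rw [Finset.sum_ite_mem, Finset.univ_inter]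
      rw [hconv] at hQsumv
      have hsub : ∑ ω ∈ A, (Qraw ω / cQ) * (S m (s+1) ω - S m s ω)
          = ∑ ω ∈ A, (Qraw ω / cQ) * S m (s+1) ω - ∑ ω ∈ A, (Qraw ω / cQ) * S m s ω := by
        rw [← Finset.sum_sub_distrib]
        exact Finset.sum_congr rfl fun ω _ => by ring
      rw [hsub] at hQsumv
      linarith
    have main : ∀ u' : ℕ, t ≤ u' → u' ≤ T →
        ∑ ω ∈ A, (Qraw ω / cQ) * S m u' ω ≤ ∑ ω ∈ A, (Qraw ω / cQ) * S m t ω := by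
      intro u' hu'
      induction u', hu' using Nat.le_induction with
      | base => intro _; exact le_refl _
      | succ w hw ih =>
        intro hwT
        exact le_trans (hstep w hw hwT) (ih (by omega))
    exact main u htu huT
  · -- supermartingale measure → no arbitrage
    rintro ⟨Q, hQprob, hQpos, hQsm⟩ ⟨h0, h, hmeas, hnn, hsf, hV0, hVT, P, hP, hEP⟩
    rcases Nat.eq_zero_or_pos T with hT0 | hT1
    · subst hT0
      simp only [_root_.expect] at hEP
      simp only [hV0, mul_zero, Finset.sum_const_zero] at hEP
      exact lt_irrefl 0 hEP
    · have hVG := vstar_eq_gstar T S h0 h hsf hV0 T hT1 le_rfl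
      have hEQ : ∑ ω, Q ω * Vstar S h0 h T ω ≤ 0 := by
        rw [Finset.sum_congr rfl (fun ω _ => by rw [hVG ω])]
        simp only [Gstar, Finset.mul_sum]
        rw [Finset.sum_comm]
        apply Finset.sum_nonpos
        intro m _
        rw [Finset.sum_comm]
        apply Finset.sum_nonpos
        intro u hu
        rw [Finset.mem_Icc] at hu
        exact single_step_nonpos T F S Q hQsm m u hu.1 hu.2 (h m u)
          ((hmeas u hu.1 hu.2).2 m) (fun ω => hnn m u hu.1 hu.2 ω)
      have hterm : ∀ ω ∈ Finset.univ, 0 ≤ Q ω * Vstar S h0 h T ω :=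
        fun ω _ => mul_nonneg (hQpos ω).le (hVT ω)
      have hsum0 : ∑ ω, Q ω * Vstar S h0 h T ω = 0 :=
        le_antisymm hEQ (Finset.sum_nonneg hterm)
      have hVzero : ∀ ω, Vstar S h0 h T ω = 0 := by
        intro ω
        have hz := (Finset.sum_eq_zero_iff_of_nonneg hterm).mp hsum0 ω (Finset.mem_univ ω)
        rcases mul_eq_zero.mp hz with h' | h'
        · exact absurd h' (ne_of_gt (hQpos ω))
        · exact h'
      simp only [_root_.expect] at hEP
      simp only [hVzero, mul_zero, Finset.sum_const_zero] at hEP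
      exact lt_irrefl 0 hEP
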